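/- If N is a nilpotent subsemigroup of B(n) containing 0 whose associated acyclic directed graph has longest directed path of length k, then N has nilpotency index k+1: every product of k+1 elements of N is 0, and some product of k elements is nonzero. -/

import Mathlib

/-- The aperiodic Brandt semigroup `B(n)` on `({1..n} × {1..n}) ∪ {0}`,
with `none` playing the role of the zero element. -/
abbrev B (n : ℕ) := Option (Fin n × Fin n)

/-- Multiplication in `B(n)`: `(i,j)(k,l) = (i,l)` if `j = k`, and `0` otherwise. -/
def bmul {n : ℕ} : B n → B n → B n
  | some (i, j), some (k, l) => if j = k then some (i, l) else none
  | _, _ => none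

/-- A subset of `B(n)` is a subsemigroup if it is closed under multiplication. -/
def IsSub {n : ℕ} (T : Set (B n)) : Prop :=
  ∀ x ∈ T, ∀ y ∈ T, bmul x y ∈ T

/-- The subsemigroup of `B(n)` generated by a subset. -/
def gen {n : ℕ} (X : Set (B n)) : Set (B n) :=
  ⋂₀ {T | IsSub T ∧ X ⊆ T}

/-- `X` is a face of the subsemigroup complex `H(B(n))`: it admits an enumeration
producing a strictly increasing chain of generated subsemigroups. -/
def IsFace {n : ℕ} (X : Set (B n)) : Prop :=
  ∃ l : List (B n), l.Nodup ∧ {x | x ∈ l} = X ∧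
    ∀ (i : ℕ) (h : i < l.length), l.get ⟨i, h⟩ ∉ gen {x | x ∈ l.take i}

/-- A facet is a maximal face. -/
def IsFacet {n : ℕ} (X : Set (B n)) : Prop :=
  IsFace X ∧ ∀ Y : Set (B n), IsFace Y → X ⊆ Y → X = Y

/-- Product `x * y₁ * ⋯ * y_k` in `B(n)`. -/
def bprod {n : ℕ} : B n → List (B n) → B n
  | x, [] => x
  | x, y :: l => bprod (bmul x y) l

/-- Closure under the inverse operation `(i,j) ↦ (j,i)`. -/
def InvClosed {n : ℕ} (T : Set (B n)) : Prop :=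
  ∀ i j : Fin n, some (i, j) ∈ T → some (j, i) ∈ T

/-- A nilpotent subsemigroup of `B(n)` containing `0`: some power is `{0}`. -/
def IsNilpSub {n : ℕ} (T : Set (B n)) : Prop :=
  IsSub T ∧ none ∈ T ∧ ∃ k : ℕ, 1 ≤ k ∧
    ∀ (x : B n) (l : List (B n)), x ∈ T → (∀ y ∈ l, y ∈ T) →
      l.length + 1 = k → bprod x l = none
/-- If `N` is a nilpotent subsemigroup of `B(n)` containing `0` whose associated
acyclic digraph has longest directed path of length `k`, then `N` has nilpotency
index `k+1`: every product of `k+1` elements of `N` is `0`, and some product of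
`k` elements is nonzero. -/
lemma bprod_none {n : ℕ} (l : List (B n)) : bprod (none : B n) l = none := by
  induction l with
  | nil => rfl
  | cons y l ih => simpa [bprod, bmul] using ih

lemma chain_of_bprod {n : ℕ} (N : Set (B n)) :
    ∀ (l : List (B n)) (a b : Fin n), (∀ y ∈ l, y ∈ N) →
      bprod (some (a, b)) l ≠ none →
      ∃ vs : List (Fin n), List.Chain (fun p q => some (p, q) ∈ N) b vs ∧
        vs.length = l.length := by
  intro l
  induction l with
  | nil => intro a b _ _; exact ⟨[], List.Chain.nil, rfl⟩
  | cons y l ih =>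
    intro a b hmem hne
    have hy : y ∈ N := hmem y (by simp)
    have hne' : bmul (some (a, b)) y ≠ none := by
      intro h
      apply hne
      simp [bprod, h, bprod_none]
    match y, hne' with
    | some (c, d), hne' =>
      have hbc : b = c := by
        by_contra h
        exact hne' (by simp [bmul, h])
      subst hbc
      have : bprod (some (a, d)) l ≠ none := by
        simpa [bprod, bmul] using hne
      obtain ⟨vs, hch, hlen⟩ := ih a d (fun z hz => hmem z (by simp [hz])) this
      exact ⟨d :: vs, List.Chain.cons (by exact hy) hch, by simp [hlen]⟩

lemma bprod_of_chain {n : ℕ} (N : Set (B n)) :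
    ∀ (vs : List (Fin n)) (a b : Fin n),
      List.Chain (fun p q => some (p, q) ∈ N) b vs →
      ∃ es : List (B n), (∀ y ∈ es, y ∈ N) ∧ es.length = vs.length ∧
        bprod (some (a, b)) es ≠ none := by
  intro vs
  induction vs with
  | nil => intro a b _; exact ⟨[], by simp, rfl, by simp [bprod]⟩
  | cons c vs ih =>
    intro a b hch
    obtain ⟨hbc, hch⟩ := List.chain_cons.1 hch
    obtain ⟨es, hmem, hlen, hne⟩ := ih a c hch
    refine ⟨some (b, c) :: es, ?_, by simp [hlen], ?_⟩
    · intro y hy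
      rcases List.mem_cons.1 hy with h | h
      · subst h; exact hbc
      · exact hmem y h
    · simpa [bprod, bmul] using hne

theorem stmt5 (n k : ℕ) (N : Set (B n)) (h0 : none ∈ N) (hN : IsSub N)
    (hnil : ∃ m : ℕ, 1 ≤ m ∧
      ∀ (x : B n) (l : List (B n)), x ∈ N → (∀ y ∈ l, y ∈ N) →
        l.length + 1 = m → bprod x l = none)
    (hpath : ∃ (i : Fin n) (l : List (Fin n)),
      List.Chain (fun a b => some (a, b) ∈ N) i l ∧ l.length = k)
    (hmax : ¬ ∃ (i : Fin n) (l : List (Fin n)),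
      List.Chain (fun a b => some (a, b) ∈ N) i l ∧ l.length = k + 1) :
    (∀ (x : B n) (l : List (B n)), x ∈ N → (∀ y ∈ l, y ∈ N) →
      l.length + 1 = k + 1 → bprod x l = none) ∧
    (1 ≤ k → ∃ (x : B n) (l : List (B n)), x ∈ N ∧ (∀ y ∈ l, y ∈ N) ∧
      l.length + 1 = k ∧ bprod x l ≠ none) := by
  constructor
  · intro x l hx hl hlen
    by_contra hne
    match x, hx with
    | none, _ => exact hne (bprod_none l)
    | some (a, b), hx =>
      obtain ⟨vs, hch, hvslen⟩ := chain_of_bprod N l a b hl hne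
      exact hmax ⟨a, b :: vs, List.Chain.cons hx hch,
        by simp [hvslen]; omega⟩
  · intro hk
    obtain ⟨i, l, hch, hlen⟩ := hpath
    match l, hlen, hch with
    | [], hlen, _ => simp at hlen; omega
    | v :: rest, hlen, hch =>
      obtain ⟨hiv, hch⟩ := List.chain_cons.1 hch
      obtain ⟨es, hmem, heslen, hne⟩ := bprod_of_chain N rest i v hch
      refine ⟨some (i, v), es, hiv, hmem, ?_, hne⟩
      simp at hlen
      omega
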